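/- Assume that c_N is invertible or c_{−N} is invertible. Then for every function u : ℝ → ℂ^d, the function □u is Borel-measurable on ℝ if and only if the restriction of u to [t₀, t_f] is Borel-measurable. -/

import Mathlib

open Matrix

/-- The indicator function of the closed interval `[t₀, t_f]`. -/
noncomputable def chi (t₀ t_f : ℝ) : ℝ → ℝ :=
  Set.indicator (Set.Icc t₀ t_f) (fun _ => (1 : ℝ))

/-- The operator `□`: `(□u)(t) = Σ_{k=−N}^{N} χ(t+kε) · (c_k ⬝ u(t+kε))`. -/
noncomputable def box {d : ℕ} (t₀ t_f ε : ℝ) (N : ℕ)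
    (c : ℤ → Matrix (Fin d) (Fin d) ℂ) (u : ℝ → Fin d → ℂ) : ℝ → Fin d → ℂ :=
  fun t => ∑ k ∈ Finset.Icc (-(N : ℤ)) (N : ℤ),
    chi t₀ t_f (t + (k : ℝ) * ε) • (c k).mulVec (u (t + (k : ℝ) * ε))

lemma measurable_mulVec_comp {d : ℕ} (A : Matrix (Fin d) (Fin d) ℂ) {f : ℝ → Fin d → ℂ}
    (hf : Measurable f) : Measurable fun t => A.mulVec (f t) := by
  rw [measurable_pi_iff]
  intro i
  simp only [Matrix.mulVec, dotProduct]
  exact Finset.measurable_sum _ fun j _ =>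
    measurable_const.mul ((measurable_pi_apply j).comp hf)

lemma box_eq {d : ℕ} (t₀ t_f ε : ℝ) (N : ℕ)
    (c : ℤ → Matrix (Fin d) (Fin d) ℂ) (u : ℝ → Fin d → ℂ) :
    box t₀ t_f ε N c u = fun t => ∑ k ∈ Finset.Icc (-(N : ℤ)) (N : ℤ),
      (c k).mulVec ((Set.Icc t₀ t_f).indicator u (t + (k : ℝ) * ε)) := by
  funext t
  unfold box
  refine Finset.sum_congr rfl fun k _ => ?_
  by_cases h : t + (k : ℝ) * ε ∈ Set.Icc t₀ t_f
  · simp [chi, Set.indicator_of_mem h]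
  · simp [chi, Set.indicator_of_notMem h]

lemma measurable_restrict_iff_indicator {s : Set ℝ} (hs : MeasurableSet s)
    {d : ℕ} (f : ℝ → Fin d → ℂ) :
    Measurable (s.restrict f) ↔ Measurable (s.indicator f) := by
  constructor
  · intro h
    apply measurable_of_restrict_of_restrict_compl hs
    · have he : s.restrict (s.indicator f) = s.restrict f := by
        funext x; exact Set.indicator_of_mem x.2 f
      change Measurable (s.restrict (s.indicator f)); rw [he]; exact h
    · have he : sᶜ.restrict (s.indicator f) = fun _ => 0 := by
        funext x; exact Set.indicator_of_notMem x.2 f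
      change Measurable (sᶜ.restrict (s.indicator f)); rw [he]; exact measurable_const
  · intro h
    have he : s.restrict f = fun x : s => s.indicator f x := by
      funext x; exact (Set.indicator_of_mem x.2 f).symm
    rw [he]
    exact h.comp measurable_subtype_coe

/-- Core upward induction: if `c_N` is invertible and `□u` is measurable, then the
indicator of `u` on `[t₀, t_f]` is measurable. -/
lemma core {d : ℕ} (t₀ t_f ε : ℝ) (hε : 0 < ε) (N : ℕ)
    (c : ℤ → Matrix (Fin d) (Fin d) ℂ) (hc : IsUnit (c (N : ℤ)))
    (u : ℝ → Fin d → ℂ) (hbox : Measurable (box t₀ t_f ε N c u)) :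
    Measurable ((Set.Icc t₀ t_f).indicator u) := by
  set w := (Set.Icc t₀ t_f).indicator u with hw
  set B := (↑hc.unit⁻¹ : Matrix (Fin d) (Fin d) ℂ) with hBdef
  have hBc : B * c (N : ℤ) = 1 := by
    rw [hBdef]
    nth_rewrite 2 [← hc.unit_spec]
    exact hc.unit.inv_mul
  have hBmul : ∀ v : Fin d → ℂ, B.mulVec ((c (N : ℤ)).mulVec v) = v := by
    intro v
    rw [Matrix.mulVec_mulVec, hBc, Matrix.one_mulVec]
  -- set split
  have hins : Finset.Icc (-(N : ℤ)) (N : ℤ) =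
      insert (N : ℤ) (Finset.Icc (-(N : ℤ)) ((N : ℤ) - 1)) := by
    ext k; simp only [Finset.mem_Icc, Finset.mem_insert]; omega
  have hNnot : (N : ℤ) ∉ Finset.Icc (-(N : ℤ)) ((N : ℤ) - 1) := by
    simp only [Finset.mem_Icc]; omega
  -- universal identity
  have key : ∀ s : ℝ, box t₀ t_f ε N c u (s - N * ε) =
      (c (N : ℤ)).mulVec (w s) +
      ∑ k ∈ Finset.Icc (-(N : ℤ)) ((N : ℤ) - 1),
        (c k).mulVec (w (s - N * ε + (k : ℝ) * ε)) := by
    intro s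
    rw [box_eq, ← hw, hins]
    simp only [Finset.sum_insert hNnot]
    have harg : s - (N : ℝ) * ε + (((N : ℤ) : ℝ)) * ε = s := by push_cast; ring
    rw [harg]
  -- induction on n
  have main : ∀ n : ℕ, Measurable ((Set.Iio (t₀ + n * ε)).indicator w) := by
    intro n
    induction n with
    | zero =>
      have hz : (Set.Iio (t₀ + (0 : ℕ) * ε)).indicator w = fun _ => 0 := by
        funext s
        by_cases h : s ∈ Set.Iio (t₀ + (0 : ℕ) * ε)
        · rw [Set.indicator_of_mem h]
          apply Set.indicator_of_notMem
          simp only [Set.mem_Iio, Nat.cast_zero, zero_mul, add_zero] at h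
          simp only [Set.mem_Icc, not_and]
          intro h'; linarith
        · exact Set.indicator_of_notMem h _
      rw [hz]; exact measurable_const
    | succ n ih =>
      set a := t₀ + n * ε with ha
      set g : ℝ → Fin d → ℂ := fun s =>
        B.mulVec (box t₀ t_f ε N c u (s - N * ε) -
          ∑ k ∈ Finset.Icc (-(N : ℤ)) ((N : ℤ) - 1),
            (c k).mulVec ((Set.Iio a).indicator w (s - N * ε + (k : ℝ) * ε))) with hg
      have hgm : Measurable g := by
        apply measurable_mulVec_comp
        apply Measurable.sub
        · exact hbox.comp (measurable_id.sub measurable_const)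
        · apply Finset.measurable_sum
          intro k _
          exact measurable_mulVec_comp _
            (ih.comp ((measurable_id.sub measurable_const).add measurable_const))
      have hsucc : t₀ + ((n : ℕ) + 1 : ℕ) * ε = a + ε := by
        rw [ha]; push_cast; ring
      have heq : (Set.Iio (t₀ + ((n : ℕ) + 1 : ℕ) * ε)).indicator w =
          fun s => (Set.Iio a).indicator w s + (Set.Ico a (a + ε)).indicator g s := by
        funext s
        rw [hsucc]
        rcases lt_or_ge s a with hs | hs
        · have h1 : s ∈ Set.Iio (a + ε) := Set.mem_Iio.mpr (by linarith)
          have h2 : s ∈ Set.Iio a := Set.mem_Iio.mpr hs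
          have h3 : s ∉ Set.Ico a (a + ε) := by
            simp only [Set.mem_Ico, not_and, not_lt]; intro h; linarith
          rw [Set.indicator_of_mem h1, Set.indicator_of_mem h2, Set.indicator_of_notMem h3]
          simp
        · rcases lt_or_ge s (a + ε) with hs2 | hs2
          · have h1 : s ∈ Set.Iio (a + ε) := Set.mem_Iio.mpr hs2
            have h2 : s ∉ Set.Iio a := by simp only [Set.mem_Iio, not_lt]; exact hs
            have h3 : s ∈ Set.Ico a (a + ε) := Set.mem_Ico.mpr ⟨hs, hs2⟩
            rw [Set.indicator_of_mem h1, Set.indicator_of_notMem h2, Set.indicator_of_mem h3]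
            -- now show w s = 0 + g s
            have hWw : ∀ k ∈ Finset.Icc (-(N : ℤ)) ((N : ℤ) - 1),
                (Set.Iio a).indicator w (s - N * ε + (k : ℝ) * ε)
                  = w (s - N * ε + (k : ℝ) * ε) := by
              intro k hk
              apply Set.indicator_of_mem
              rw [Set.mem_Iio]
              rw [Finset.mem_Icc] at hk
              have hk1 : (k : ℝ) ≤ (N : ℝ) - 1 := by
                have : (k : ℝ) ≤ ((N : ℤ) - 1 : ℤ) := by exact_mod_cast hk.2
                push_cast at this; linarith
              have : (k : ℝ) * ε ≤ ((N : ℝ) - 1) * ε :=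
                mul_le_mul_of_nonneg_right hk1 (le_of_lt hε)
              nlinarith
            rw [hg]
            simp only
            rw [Finset.sum_congr rfl fun k hk => by rw [hWw k hk]]
            rw [key s]
            rw [add_sub_cancel_right, hBmul]
            simp
          · have h1 : s ∉ Set.Iio (a + ε) := by simp only [Set.mem_Iio, not_lt]; exact hs2
            have h2 : s ∉ Set.Iio a := by simp only [Set.mem_Iio, not_lt]; linarith
            have h3 : s ∉ Set.Ico a (a + ε) := by
              simp only [Set.mem_Ico, not_and, not_lt]; intro h; linarith
            rw [Set.indicator_of_notMem h1, Set.indicator_of_notMem h2,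
              Set.indicator_of_notMem h3]
            simp
      rw [heq]
      exact ih.add (hgm.indicator measurableSet_Ico)
  -- conclude
  obtain ⟨n, hn⟩ := exists_nat_gt ((t_f - t₀) / ε)
  have hfin : w = (Set.Iio (t₀ + n * ε)).indicator w := by
    funext s
    by_cases h : s ∈ Set.Iio (t₀ + n * ε)
    · rw [Set.indicator_of_mem h]
    · rw [Set.indicator_of_notMem h]
      apply Set.indicator_of_notMem
      simp only [Set.mem_Iio, not_lt] at h
      simp only [Set.mem_Icc, not_and, not_le]
      intro _
      have : t_f - t₀ < n * ε := by
        rw [div_lt_iff₀ hε] at hn; linarith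
      linarith
  rw [hfin]
  exact main n

/-- Reflection: the box operator of reflected data agrees with the reflected box. -/
lemma box_reflect {d : ℕ} (t₀ t_f ε : ℝ) (N : ℕ)
    (c : ℤ → Matrix (Fin d) (Fin d) ℂ) (u : ℝ → Fin d → ℂ) :
    box (-t_f) (-t₀) ε N (fun k => c (-k)) (fun t => u (-t)) =
      fun t => box t₀ t_f ε N c u (-t) := by
  funext t
  unfold box
  rw [Finset.sum_nbij' (i := fun k => -k) (j := fun k => -k)]
  · intro k hk; simp only [Finset.mem_Icc] at hk ⊢; omega
  · intro k hk; simp only [Finset.mem_Icc] at hk ⊢; omega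
  · intro k _; omega
  · intro k _; omega
  · intro k _
    have h1 : chi (-t_f) (-t₀) (t + (k : ℝ) * ε) = chi t₀ t_f (-t + ((-k : ℤ) : ℝ) * ε) := by
      unfold chi
      have : t + (k : ℝ) * ε ∈ Set.Icc (-t_f) (-t₀) ↔
          -t + ((-k : ℤ) : ℝ) * ε ∈ Set.Icc t₀ t_f := by
        simp only [Set.mem_Icc]
        push_cast
        constructor <;> intro h <;> constructor <;> linarith [h.1, h.2]
      by_cases h : t + (k : ℝ) * ε ∈ Set.Icc (-t_f) (-t₀)
      · rw [Set.indicator_of_mem h, Set.indicator_of_mem (this.mp h)]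
      · rw [Set.indicator_of_notMem h, Set.indicator_of_notMem (fun hh => h (this.mpr hh))]
    have h2 : -(t + (k : ℝ) * ε) = -t + ((-k : ℤ) : ℝ) * ε := by push_cast; ring
    rw [h1]
    beta_reduce
    rw [h2]

theorem stmt7 (t₀ t_f ε : ℝ) (ht : t₀ < t_f) (hε : 0 < ε)
    (d N : ℕ) (hd : 1 ≤ d) (hN : 1 ≤ N)
    (c : ℤ → Matrix (Fin d) (Fin d) ℂ)
    (hinv : IsUnit (c (N : ℤ)) ∨ IsUnit (c (-(N : ℤ))))
    (u : ℝ → Fin d → ℂ) :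
    Measurable (box t₀ t_f ε N c u) ↔ Measurable ((Set.Icc t₀ t_f).restrict u) := by
  rw [measurable_restrict_iff_indicator measurableSet_Icc]
  constructor
  · intro hbox
    rcases hinv with hc | hc
    · exact core t₀ t_f ε hε N c hc u hbox
    · -- reflect
      have hbox' : Measurable (box (-t_f) (-t₀) ε N (fun k => c (-k)) (fun t => u (-t))) := by
        rw [box_reflect]
        exact hbox.comp measurable_neg
      have hc' : IsUnit ((fun k => c (-k)) (N : ℤ)) := hc
      have hmeas := core (-t_f) (-t₀) ε hε N (fun k => c (-k)) hc' (fun t => u (-t)) hbox'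
      have heq : (Set.Icc t₀ t_f).indicator u =
          fun t => (Set.Icc (-t_f) (-t₀)).indicator (fun t => u (-t)) (-t) := by
        funext t
        by_cases h : t ∈ Set.Icc t₀ t_f
        · rw [Set.indicator_of_mem h, Set.indicator_of_mem]
          · simp
          · simp only [Set.mem_Icc] at h ⊢; constructor <;> linarith [h.1, h.2]
        · rw [Set.indicator_of_notMem h, Set.indicator_of_notMem]
          intro hh
          apply h
          simp only [Set.mem_Icc] at hh ⊢
          constructor <;> linarith [hh.1, hh.2]
      rw [heq]
      exact hmeas.comp measurable_neg
  · intro hind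
    rw [box_eq]
    apply Finset.measurable_sum
    intro k _
    exact measurable_mulVec_comp _ (hind.comp (measurable_id.add measurable_const))
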